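/- Let Q be a v × s contrast matrix of full column rank s (Qᵀ1_v = 0, no zero rows), and let Φ : ℝ^{s×s} → ℝ be Loewner-isotone on positive semidefinite matrices. Let l, m, D be positive integers with D < m, set n = lm, T = {1,…,n}, and let the nuisance regressor be the trigonometric time trend of degree D: h(t) = (1, cos(2πt/n), sin(2πt/n), …, cos(2πDt/n), sin(2πDt/n))ᵀ ∈ ℝ^{2D+1}. Let σ_p : {1,…,l} → {1,…,v} be a sequence of treatments in which every treatment occurs, and suppose its treatment proportions w*, given by w*_u = |{k : σ_p(k) = u}|/l, are Φ-optimal in the marginal model: Φ(N_Q(w*)) ≥ Φ(N_Q(w)) for all w ∈ ℝ^v with w_u > 0 and Σ_u w_u = 1. Define σ : {1,…,n} → {1,…,v} by σ(k + l·j) = σ_p(k) (the m-fold replication of σ_p) and the exact design ξ_σ(u,t) = 1/n if σ(t) = u and 0 otherwise. Then ξ_σ is feasible, (Kᵀ G* K)⁻¹ = N_Q(w*) for every generalized inverse G* of M(ξ_σ), and ξ_σ is Φ-optimal: Φ(N_Q(w*)) ≥ Φ((Kᵀ G K)⁻¹) for every feasible design ξ and every generalized inverse G of M(ξ). -/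

import Mathlib

open Matrix Finset

noncomputable section

/-- An approximate design on `v` treatments and `n` nuisance conditions:
nonnegative weights summing to one. -/
def IsDesign {v n : ℕ} (ξ : Fin v → Fin n → ℝ) : Prop :=
  (∀ u t, 0 ≤ ξ u t) ∧ ∑ u, ∑ t, ξ u t = 1

/-- The treatment proportions design of `ξ`: `(w_ξ)_u = ∑_t ξ(u,t)`. -/
def tpd {v n : ℕ} (ξ : Fin v → Fin n → ℝ) : Fin v → ℝ :=
  fun u => ∑ t, ξ u t

/-- The regression vector `f(u,t) = (e_uᵀ, h(t)ᵀ)ᵀ`. -/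
def regvec {v n : ℕ} {ι : Type*} (h : Fin n → ι → ℝ) (u : Fin v) (t : Fin n) :
    Fin v ⊕ ι → ℝ :=
  Sum.elim (fun i => if i = u then 1 else 0) (h t)

/-- The moment matrix `M(ξ) = ∑_{u,t} ξ(u,t) f(u,t) f(u,t)ᵀ`. -/
def momM {v n : ℕ} {ι : Type*} [Fintype ι] (h : Fin n → ι → ℝ)
    (ξ : Fin v → Fin n → ℝ) : Matrix (Fin v ⊕ ι) (Fin v ⊕ ι) ℝ :=
  ∑ u, ∑ t, ξ u t • vecMulVec (regvec h u t) (regvec h u t)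

/-- The matrix `K = (Qᵀ, 0)ᵀ`. -/
def Kmat {v s : ℕ} (ι : Type*) (Q : Matrix (Fin v) (Fin s) ℝ) :
    Matrix (Fin v ⊕ ι) (Fin s) ℝ :=
  Matrix.of fun i j => Sum.elim (fun a => Q a j) (fun _ => 0) i

/-- Feasibility of a design: the column space of `K` is contained in the
column space of `M(ξ)`. -/
def Feasible {v n s : ℕ} {ι : Type*} [Fintype ι] (h : Fin n → ι → ℝ)
    (Q : Matrix (Fin v) (Fin s) ℝ) (ξ : Fin v → Fin n → ℝ) : Prop :=
  LinearMap.range (Kmat ι Q).mulVecLin ≤ LinearMap.range (momM h ξ).mulVecLin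

/-- `G` is a generalized inverse of `M`. -/
def IsGInv {ι : Type*} [Fintype ι] (M G : Matrix ι ι ℝ) : Prop :=
  M * G * M = M

/-- Information matrix `N_Q(w) = (Qᵀ diag(w)⁻¹ Q)⁻¹` of a treatment
proportions design in the marginal model. -/
def NQ {v s : ℕ} (Q : Matrix (Fin v) (Fin s) ℝ) (w : Fin v → ℝ) :
    Matrix (Fin s) (Fin s) ℝ :=
  (Qᵀ * diagonal (fun u => (w u)⁻¹) * Q)⁻¹

/-- The matrix `H_ξ` whose `u`-th column is `(1/w_u) ∑_t ξ(u,t) h(t)`. -/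
def Hmat {v n : ℕ} {ι : Type*} (h : Fin n → ι → ℝ) (ξ : Fin v → Fin n → ℝ) :
    Matrix ι (Fin v) ℝ :=
  Matrix.of fun i u => (tpd ξ u)⁻¹ * ∑ t, ξ u t * h t i

/-- `ξ` is resistant to nuisance effects for the contrasts `Q`. -/
def NuisanceResistant {v n s : ℕ} {ι : Type*} (h : Fin n → ι → ℝ)
    (Q : Matrix (Fin v) (Fin s) ℝ) (ξ : Fin v → Fin n → ℝ) : Prop :=
  Hmat h ξ * Q = 0

/-- `ξ` is balanced: all columns of `H_ξ` coincide. -/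
def BalancedDesign {v n : ℕ} {ι : Type*} (h : Fin n → ι → ℝ)
    (ξ : Fin v → Fin n → ℝ) : Prop :=
  ∀ u u' : Fin v, (fun i => Hmat h ξ i u) = (fun i => Hmat h ξ i u')


section Aux

set_option linter.unusedSectionVars false

variable {ι : Type*} [Fintype ι]

lemma star_pi (x : ι → ℝ) : star x = x := funext fun _ => rfl

lemma dot_symm {M : Matrix ι ι ℝ} (hM : Mᵀ = M) (y z : ι → ℝ) :
    y ⬝ᵥ M *ᵥ z = z ⬝ᵥ M *ᵥ y := by
  conv_lhs => rw [← hM]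
  rw [dotProduct_mulVec, vecMul_transpose, dotProduct_comm]

lemma psd_transpose_eq {M : Matrix ι ι ℝ} (hM : M.PosSemidef) : Mᵀ = M := by
  have h := hM.1
  rw [Matrix.IsHermitian] at h
  ext i j
  have := congrFun (congrFun h i) j
  simpa [conjTranspose_apply] using this

lemma psd_cs {M : Matrix ι ι ℝ} (hM : M.PosSemidef) (y z : ι → ℝ) :
    (z ⬝ᵥ M *ᵥ y) ^ 2 ≤ (z ⬝ᵥ M *ᵥ z) * (y ⬝ᵥ M *ᵥ y) := by
  have hsym := psd_transpose_eq hM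
  have key : ∀ x : ℝ, 0 ≤ (z ⬝ᵥ M *ᵥ z) * (x * x) + (2 * (z ⬝ᵥ M *ᵥ y)) * x
      + (y ⬝ᵥ M *ᵥ y) := by
    intro x
    have h0 := hM.dotProduct_mulVec_nonneg (y + x • z)
    rw [star_pi] at h0
    have hexp : (y + x • z) ⬝ᵥ M *ᵥ (y + x • z)
        = (z ⬝ᵥ M *ᵥ z) * (x * x) + (2 * (z ⬝ᵥ M *ᵥ y)) * x + (y ⬝ᵥ M *ᵥ y) := by
      simp only [mulVec_add, mulVec_smul, add_dotProduct, dotProduct_add,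
        smul_dotProduct, dotProduct_smul, smul_eq_mul, dot_symm hsym y z]
      ring
    linarith [hexp ▸ h0]
  have hd := discrim_le_zero key
  rw [discrim] at hd
  nlinarith [hd]

lemma psd_dot_nonneg {M : Matrix ι ι ℝ} (hM : M.PosSemidef) (x : ι → ℝ) :
    0 ≤ x ⬝ᵥ M *ᵥ x := by
  have := hM.dotProduct_mulVec_nonneg x
  rwa [star_pi] at this

lemma inv_sub_inv_psd {s : ℕ} {A B : Matrix (Fin s) (Fin s) ℝ}
    (hA : A.PosDef) (hB : B.PosDef) (hAB : (A - B).PosSemidef) :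
    (B⁻¹ - A⁻¹).PosSemidef := by
  have hAinv : A⁻¹.PosDef := hA.inv
  have hBinv : B⁻¹.PosDef := hB.inv
  have hBsym : Bᵀ = B := psd_transpose_eq hB.posSemidef
  have hBiv : B * B⁻¹ = 1 := mul_nonsing_inv B (isUnit_iff_isUnit_det B |>.1 hB.isUnit)
  have hAiv : A * A⁻¹ = 1 := mul_nonsing_inv A (isUnit_iff_isUnit_det A |>.1 hA.isUnit)
  refine posSemidef_iff_dotProduct_mulVec.mpr ⟨?_, ?_⟩
  · exact hBinv.posSemidef.1.sub hAinv.posSemidef.1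
  · intro x
    rw [star_pi]
    set p := B⁻¹ *ᵥ x with hp
    set q := A⁻¹ *ᵥ x with hq
    have h1 : p ⬝ᵥ B *ᵥ q = x ⬝ᵥ A⁻¹ *ᵥ x := by
      rw [dotProduct_mulVec, ← hBsym, vecMul_transpose, hp, mulVec_mulVec, hBiv, one_mulVec]
    have h2 : p ⬝ᵥ B *ᵥ p = x ⬝ᵥ B⁻¹ *ᵥ x := by
      rw [hp, mulVec_mulVec, hBiv, one_mulVec, dotProduct_comm]
    have h3 : q ⬝ᵥ A *ᵥ q = x ⬝ᵥ A⁻¹ *ᵥ x := by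
      conv_lhs => rw [hq, mulVec_mulVec, hAiv, one_mulVec]
      exact dotProduct_comm _ _
    have h4 : q ⬝ᵥ B *ᵥ q ≤ x ⬝ᵥ A⁻¹ *ᵥ x := by
      have := psd_dot_nonneg hAB q
      rw [sub_mulVec, dotProduct_sub] at this
      linarith [h3]
    have hcs := psd_cs hB.posSemidef q p
    rw [h1, h2] at hcs
    have hq0 : 0 ≤ x ⬝ᵥ A⁻¹ *ᵥ x := psd_dot_nonneg hAinv.posSemidef x
    have hb0 : 0 ≤ q ⬝ᵥ B *ᵥ q := psd_dot_nonneg hB.posSemidef q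
    have hp0 : 0 ≤ x ⬝ᵥ B⁻¹ *ᵥ x := psd_dot_nonneg hBinv.posSemidef x
    have hgoal : x ⬝ᵥ A⁻¹ *ᵥ x ≤ x ⬝ᵥ B⁻¹ *ᵥ x := by
      rcases eq_or_lt_of_le hq0 with h | h
      · linarith
      · nlinarith [hcs, h4]
    rw [sub_mulVec, dotProduct_sub]
    linarith


section MomM

variable {v n s : ℕ} (h : Fin n → ι → ℝ) (ξ : Fin v → Fin n → ℝ)

lemma momM_apply (i k : Fin v ⊕ ι) :
    momM h ξ i k = ∑ u, ∑ t, ξ u t * (regvec h u t i * regvec h u t k) := by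
  simp [momM, Matrix.sum_apply, Matrix.smul_apply, vecMulVec_apply, mul_assoc]

lemma momM_symmAux (i k : Fin v ⊕ ι) : momM h ξ k i = momM h ξ i k := by
  simp only [momM_apply]
  exact Finset.sum_congr rfl fun u _ => Finset.sum_congr rfl fun t _ => by ring

lemma momM_transpose : (momM h ξ)ᵀ = momM h ξ := by
  ext i k
  exact momM_symmAux h ξ i k

lemma momM_inl_inl (a b : Fin v) :
    momM h ξ (Sum.inl a) (Sum.inl b) = if a = b then tpd ξ a else 0 := by
  rw [momM_apply]
  have key : ∀ u : Fin v,
      ∑ t, ξ u t * (regvec h u t (Sum.inl a) * regvec h u t (Sum.inl b))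
      = if a = u then (if a = b then tpd ξ u else 0) else 0 := by
    intro u
    simp only [regvec, Sum.elim_inl]
    by_cases h1 : a = u
    · by_cases h2 : a = b
      · subst h1; subst h2; simp [tpd]
      · have hbu : ¬ b = u := by rw [← h1]; exact fun hc => h2 hc.symm
        have hub : ¬ u = b := by rw [← h1]; exact h2
        simp [h1, hbu, h2, hub]
    · simp [h1]
  rw [Finset.sum_congr rfl fun u _ => key u, Finset.sum_ite_eq]
  simp [tpd]

lemma momM_inl_inr (a : Fin v) (i : ι) :
    momM h ξ (Sum.inl a) (Sum.inr i) = ∑ t, ξ a t * h t i := by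
  rw [momM_apply]
  have key : ∀ u : Fin v,
      ∑ t, ξ u t * (regvec h u t (Sum.inl a) * regvec h u t (Sum.inr i))
      = if a = u then ∑ t, ξ u t * h t i else 0 := by
    intro u
    simp only [regvec, Sum.elim_inl, Sum.elim_inr]
    split_ifs with h1 <;> simp
  rw [Finset.sum_congr rfl fun u _ => key u, Finset.sum_ite_eq]
  simp

lemma momM_inr_inl (a : Fin v) (i : ι) :
    momM h ξ (Sum.inr i) (Sum.inl a) = ∑ t, ξ a t * h t i := by
  rw [momM_symmAux, momM_inl_inr]

lemma sum_mulVec' {α : Type*} (s : Finset α) (A : α → Matrix ι ι ℝ) (x : ι → ℝ) :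
    (∑ a ∈ s, A a) *ᵥ x = ∑ a ∈ s, A a *ᵥ x := by
  ext i
  simp only [mulVec, dotProduct, Matrix.sum_apply, Finset.sum_apply, Finset.sum_mul]
  rw [Finset.sum_comm]

lemma vecMulVec_mulVec' (w x : ι → ℝ) :
    vecMulVec w w *ᵥ x = (w ⬝ᵥ x) • w := by
  ext i
  simp only [mulVec, dotProduct, vecMulVec_apply, Pi.smul_apply, smul_eq_mul,
    Finset.sum_mul]
  exact Finset.sum_congr rfl fun k _ => by ring

lemma dot_sum' {α : Type*} (s : Finset α) (x : ι → ℝ) (f : α → ι → ℝ) :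
    x ⬝ᵥ (∑ a ∈ s, f a) = ∑ a ∈ s, x ⬝ᵥ f a := by
  simp only [dotProduct, Finset.sum_apply, Finset.mul_sum]
  rw [Finset.sum_comm]

lemma momM_quad (x : Fin v ⊕ ι → ℝ) :
    x ⬝ᵥ momM h ξ *ᵥ x = ∑ u, ∑ t, ξ u t * (regvec h u t ⬝ᵥ x) ^ 2 := by
  rw [momM, sum_mulVec', dot_sum']
  refine Finset.sum_congr rfl fun u _ => ?_
  rw [sum_mulVec', dot_sum']
  refine Finset.sum_congr rfl fun t _ => ?_
  rw [smul_mulVec, dotProduct_smul, smul_eq_mul, vecMulVec_mulVec',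
    dotProduct_smul, smul_eq_mul, dotProduct_comm]
  ring

lemma momM_psd (hξ : ∀ u t, 0 ≤ ξ u t) : (momM h ξ).PosSemidef := by
  refine posSemidef_iff_dotProduct_mulVec.mpr ⟨?_, ?_⟩
  · show _ = _
    ext i k
    simp only [conjTranspose_apply, star_trivial]
    exact momM_symmAux h ξ i k
  · intro x
    rw [star_pi, momM_quad]
    exact Finset.sum_nonneg fun u _ => Finset.sum_nonneg fun t _ =>
      mul_nonneg (hξ u t) (sq_nonneg _)

lemma ginv_calc {M G : Matrix (Fin v ⊕ ι) (Fin v ⊕ ι) ℝ}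
    {Z K : Matrix (Fin v ⊕ ι) (Fin s) ℝ}
    (hsym : Mᵀ = M) (hG : M * G * M = M) (hZ : M * Z = K) :
    Kᵀ * G * K = Zᵀ * K := by
  have h2 : M * (G * (M * Z)) = M * Z := by
    rw [← Matrix.mul_assoc, ← Matrix.mul_assoc, hG]
  calc Kᵀ * G * K = (M * Z)ᵀ * G * (M * Z) := by rw [hZ]
    _ = Zᵀ * (M * (G * (M * Z))) := by
        rw [transpose_mul, hsym]
        simp only [Matrix.mul_assoc]
    _ = Zᵀ * (M * Z) := by rw [h2]
    _ = Zᵀ * K := by rw [hZ]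

lemma feasible_of_MZ {Q : Matrix (Fin v) (Fin s) ℝ}
    {Z : Matrix (Fin v ⊕ ι) (Fin s) ℝ}
    (hZ : momM h ξ * Z = Kmat ι Q) : Feasible h Q ξ := by
  rintro x ⟨c, rfl⟩
  exact ⟨Z *ᵥ c, by rw [mulVecLin_apply, mulVecLin_apply, mulVec_mulVec, hZ]⟩

lemma exists_Z_of_feasible {Q : Matrix (Fin v) (Fin s) ℝ}
    (hf : Feasible h Q ξ) : ∃ Z : Matrix (Fin v ⊕ ι) (Fin s) ℝ, momM h ξ * Z = Kmat ι Q := by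
  have hmem : ∀ j : Fin s, (Kmat ι Q) *ᵥ Pi.single j 1
      ∈ LinearMap.range (momM h ξ).mulVecLin := by
    intro j
    exact hf ⟨Pi.single j 1, rfl⟩
  choose y hy using hmem
  refine ⟨Matrix.of fun i j => y j i, ?_⟩
  ext i j
  have := congrFun (hy j) i
  rw [mulVecLin_apply] at this
  calc (momM h ξ * Matrix.of fun i j => y j i) i j
      = (momM h ξ *ᵥ y j) i := by simp [Matrix.mul_apply, mulVec, dotProduct]
    _ = ((Kmat ι Q) *ᵥ Pi.single j 1) i := this
    _ = Kmat ι Q i j := by rw [mulVec_single_one]; rfl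

end MomM

end Aux


section Trig

open Complex in
lemma zeta_ne_one {m b : ℕ} (hm : 0 < m) (hb0 : 0 < b) (hbm : b < m) :
    Complex.exp (((2 * Real.pi * b / m : ℝ) : ℂ) * Complex.I) ≠ 1 := by
  intro hcon
  rw [Complex.exp_eq_one_iff] at hcon
  obtain ⟨k, hk⟩ := hcon
  have him := congrArg Complex.im hk
  simp only [Complex.mul_im, Complex.ofReal_re, Complex.I_im, Complex.ofReal_im,
    Complex.I_re, mul_zero, mul_one, zero_mul, add_zero, Complex.intCast_re,
    Complex.intCast_im, zero_add, Complex.re_ofNat, Complex.im_ofNat,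
    Complex.mul_re] at him
  -- him : 2 * π * b / m = k * (2 * π)  (in some arrangement)
  have hπ := Real.pi_pos
  have hm' : (0:ℝ) < m := by exact_mod_cast hm
  have hb' : (0:ℝ) < b := by exact_mod_cast hb0
  have hbm' : (b:ℝ) < m := by exact_mod_cast hbm
  have hkey : (b : ℝ) = k * m := by
    field_simp at him
    nlinarith [him]
  rcases le_or_gt (k:ℝ) 0 with hk0 | hk0
  · nlinarith
  · have hk1 : (1:ℝ) ≤ k := by exact_mod_cast (by exact_mod_cast hk0 : (0:ℤ) < k)
    nlinarith

open Complex in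
lemma zeta_pow_m {m b : ℕ} (hm : 0 < m) :
    Complex.exp (((2 * Real.pi * b / m : ℝ) : ℂ) * Complex.I) ^ m = 1 := by
  rw [← Complex.exp_nat_mul]
  have harg : (m : ℂ) * ((((2 * Real.pi * b / m : ℝ) : ℂ)) * Complex.I)
      = (b : ℤ) * (2 * (Real.pi : ℂ) * Complex.I) := by
    have hm0 : (m : ℂ) ≠ 0 := by exact_mod_cast hm.ne'
    push_cast
    field_simp
  rw [harg, Complex.exp_int_mul_two_pi_mul_I]

open Complex in
lemma zeta_geom_sum {m b : ℕ} (hm : 0 < m) (hb0 : 0 < b) (hbm : b < m) :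
    ∑ i : Fin m, Complex.exp (((2 * Real.pi * b / m : ℝ) : ℂ) * Complex.I) ^ (i : ℕ)
      = 0 := by
  rw [Fin.sum_univ_eq_sum_range, geom_sum_eq (zeta_ne_one hm hb0 hbm) m,
    zeta_pow_m hm]
  simp

open Complex in
lemma trig_sum_zero {v l m n : ℕ} (hl : 0 < l) (hm : 0 < m) (hn : n = l * m)
    (σp : Fin l → Fin v) (σ : Fin n → Fin v)
    (hσ : ∀ t : Fin n, σ t = σp ⟨(t : ℕ) % l, Nat.mod_lt _ hl⟩)
    (u : Fin v) {b : ℕ} (hb0 : 0 < b) (hbm : b < m) :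
    ∑ t : Fin n, (if σ t = u then
      Complex.exp (((2 * Real.pi * b * ((t : ℕ) + 1) / n : ℝ) : ℂ) * Complex.I)
      else 0) = 0 := by
  have hn0 : (n : ℝ) ≠ 0 := by
    have : 0 < n := by rw [hn]; positivity
    exact_mod_cast this.ne'
  set c : ℂ := ((2 * Real.pi * b / n : ℝ) : ℂ) * Complex.I with hc
  have hterm : ∀ t : Fin n, (((2 * Real.pi * b * ((t : ℕ) + 1) / n : ℝ) : ℂ))
      * Complex.I = c * (((t : ℕ) : ℂ) + 1) := by
    intro t
    rw [hc]
    push_cast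
    field_simp
  have hml : m * l = n := by rw [hn, mul_comm]
  set e : Fin m × Fin l ≃ Fin n := finProdFinEquiv.trans (finCongr hml) with he
  have hval : ∀ p : Fin m × Fin l, ((e p : Fin n) : ℕ) = (p.2 : ℕ) + l * (p.1 : ℕ) := by
    intro p; rfl
  rw [← Equiv.sum_comp e (fun t => if σ t = u then
      Complex.exp (((2 * Real.pi * b * ((t : ℕ) + 1) / n : ℝ) : ℂ) * Complex.I) else 0),
    Fintype.sum_prod_type]
  have hσe : ∀ (i : Fin m) (j : Fin l), σ (e (i, j)) = σp j := by
    intro i j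
    rw [hσ]
    congr 1
    ext
    simp only [hval]
    show ((j : ℕ) + l * (i : ℕ)) % l = (j : ℕ)
    rw [Nat.add_mul_mod_self_left, Nat.mod_eq_of_lt j.isLt]
  set ζ : ℂ := Complex.exp (((2 * Real.pi * b / m : ℝ) : ℂ) * Complex.I) with hζ
  have hζc : Complex.exp (c * l) = ζ := by
    rw [hc, hζ]
    congr 1
    push_cast
    rw [hn]
    have hl0 : (l : ℂ) ≠ 0 := by exact_mod_cast hl.ne'
    have hm0 : (m : ℂ) ≠ 0 := by exact_mod_cast hm.ne'
    field_simp
    push_cast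
    ring
  have hsplit : ∀ (i : Fin m) (j : Fin l),
      (if σ (e (i, j)) = u then
        Complex.exp (((2 * Real.pi * b * (((e (i, j) : Fin n) : ℕ) + 1) / n : ℝ) : ℂ)
          * Complex.I) else 0)
      = (if σp j = u then Complex.exp (c * ((j : ℕ) + 1)) else 0) * ζ ^ (i : ℕ) := by
    intro i j
    rw [hσe i j, hterm, hval]
    have : c * ((((j : ℕ) + l * (i : ℕ) : ℕ) : ℂ) + 1)
        = c * ((j : ℕ) + 1) + (i : ℕ) * (c * l) := by push_cast; ring
    rw [this, Complex.exp_add, Complex.exp_nat_mul, hζc]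
    split_ifs <;> simp
  calc ∑ i : Fin m, ∑ j : Fin l, (if σ (e (i, j)) = u then
        Complex.exp (((2 * Real.pi * b * (((e (i, j) : Fin n) : ℕ) + 1) / n : ℝ) : ℂ)
          * Complex.I) else 0)
      = ∑ i : Fin m, (∑ j : Fin l,
          (if σp j = u then Complex.exp (c * ((j : ℕ) + 1)) else 0)) * ζ ^ (i : ℕ) := by
        refine Finset.sum_congr rfl fun i _ => ?_
        rw [Finset.sum_mul]
        exact Finset.sum_congr rfl fun j _ => hsplit i j
    _ = (∑ j : Fin l, (if σp j = u then Complex.exp (c * ((j : ℕ) + 1)) else 0))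
          * ∑ i : Fin m, ζ ^ (i : ℕ) := by rw [Finset.mul_sum]
    _ = 0 := by rw [hζ, zeta_geom_sum hm hb0 hbm, mul_zero]

end Trig


lemma rep_count {v l m n : ℕ} (hl : 0 < l) (hm : 0 < m) (hn : n = l * m)
    (σp : Fin l → Fin v) (σ : Fin n → Fin v)
    (hσ : ∀ t : Fin n, σ t = σp ⟨(t : ℕ) % l, Nat.mod_lt _ hl⟩) (u : Fin v) :
    ∑ t : Fin n, (if σ t = u then (n : ℝ)⁻¹ else 0)
      = ((Finset.univ.filter fun k => σp k = u).card : ℝ) / l := by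
  classical
  have hml : m * l = n := by rw [hn, mul_comm]
  set e : Fin m × Fin l ≃ Fin n := finProdFinEquiv.trans (finCongr hml) with he
  have hσe : ∀ (i : Fin m) (j : Fin l), σ (e (i, j)) = σp j := by
    intro i j
    rw [hσ]
    congr 1
    ext
    show ((j : ℕ) + l * (i : ℕ)) % l = (j : ℕ)
    rw [Nat.add_mul_mod_self_left, Nat.mod_eq_of_lt j.isLt]
  rw [← Equiv.sum_comp e (fun t => if σ t = u then (n : ℝ)⁻¹ else 0),
    Fintype.sum_prod_type]
  have hinner : ∀ i : Fin m, ∑ j : Fin l, (if σ (e (i, j)) = u then (n : ℝ)⁻¹ else 0)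
      = ((Finset.univ.filter fun k => σp k = u).card : ℝ) * (n : ℝ)⁻¹ := by
    intro i
    rw [Finset.sum_congr rfl fun j _ => by rw [hσe i j]]
    rw [Finset.sum_ite, Finset.sum_const, Finset.sum_const_zero, add_zero,
      nsmul_eq_mul]
  rw [Finset.sum_congr rfl fun i _ => hinner i, Finset.sum_const, nsmul_eq_mul,
    Finset.card_univ, Fintype.card_fin]
  have hl0 : (l : ℝ) ≠ 0 := by exact_mod_cast hl.ne'
  have hm0 : (m : ℝ) ≠ 0 := by exact_mod_cast hm.ne'
  have hn0 : (n : ℝ) ≠ 0 := by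
    rw [hn]; push_cast; exact mul_ne_zero hl0 hm0
  rw [hn]
  push_cast
  field_simp

/-- In the trigonometric time-trend model of degree D on
n = l·m times (D < m), the exact design ξ_σ obtained by m-fold replication of
a treatment sequence σ_p of length l whose treatment proportions w* are
Φ-optimal in the marginal model is feasible, has information matrix
(KᵀG*K)⁻¹ = N_Q(w*) for every generalized inverse G* of M(ξ_σ), and is
Φ-optimal among all designs. Here the nuisance coordinates are indexed by
Unit ⊕ (Fin D × Bool): the constant regressor 1 and, for each degree a+1 ≤ D,
the regressors cos(2π(a+1)t/n) and sin(2π(a+1)t/n). -/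
theorem stmt17 {v s l m D : ℕ} (hv : 2 ≤ v) (hl : 0 < l) (hm : 0 < m)
    (hD : 0 < D) (hDm : D < m)
    (Q : Matrix (Fin v) (Fin s) ℝ)
    (hQc : ∀ j, ∑ i, Q i j = 0) (hQrow : ∀ i, ∃ j, Q i j ≠ 0)
    (hQrank : Q.rank = s)
    (Φ : Matrix (Fin s) (Fin s) ℝ → ℝ)
    (hiso : ∀ A B : Matrix (Fin s) (Fin s) ℝ,
      A.PosSemidef → B.PosSemidef → (B - A).PosSemidef → Φ A ≤ Φ B)
    (n : ℕ) (hn : n = l * m)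
    (h : Fin n → (Unit ⊕ Fin D × Bool) → ℝ)
    (hh : ∀ t : Fin n, h t = Sum.elim (fun _ => 1) (fun q =>
      if q.2 then Real.sin (2 * Real.pi * ((q.1 : ℕ) + 1) * ((t : ℕ) + 1) / n)
      else Real.cos (2 * Real.pi * ((q.1 : ℕ) + 1) * ((t : ℕ) + 1) / n)))
    (σp : Fin l → Fin v) (hσp : Function.Surjective σp)
    (wstar : Fin v → ℝ)
    (hwstar : ∀ u, wstar u
      = ((Finset.univ.filter fun k => σp k = u).card : ℝ) / l)
    (hopt : ∀ w : Fin v → ℝ, (∀ u, 0 < w u) → ∑ u, w u = 1 →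
      Φ (NQ Q w) ≤ Φ (NQ Q wstar))
    (σ : Fin n → Fin v)
    (hσ : ∀ t : Fin n, σ t = σp ⟨(t : ℕ) % l, Nat.mod_lt _ hl⟩)
    (ξσ : Fin v → Fin n → ℝ)
    (hξσ : ∀ u t, ξσ u t = if σ t = u then (n : ℝ)⁻¹ else 0) :
    Feasible h Q ξσ ∧
    (∀ G, IsGInv (momM h ξσ) G →
      ((Kmat (Unit ⊕ Fin D × Bool) Q)ᵀ * G * Kmat (Unit ⊕ Fin D × Bool) Q)⁻¹
        = NQ Q wstar) ∧
    (∀ ξ, IsDesign ξ → Feasible h Q ξ → ∀ G, IsGInv (momM h ξ) G →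
      Φ (((Kmat (Unit ⊕ Fin D × Bool) Q)ᵀ * G * Kmat (Unit ⊕ Fin D × Bool) Q)⁻¹)
        ≤ Φ (NQ Q wstar)) := by
  classical
  set K : Matrix (Fin v ⊕ (Unit ⊕ Fin D × Bool)) (Fin s) ℝ
    := Kmat (Unit ⊕ Fin D × Bool) Q with hKdef
  -- positivity of wstar
  have hwpos : ∀ u, 0 < wstar u := by
    intro u
    rw [hwstar]
    obtain ⟨k, hk⟩ := hσp u
    have hcard : 0 < (Finset.univ.filter fun k => σp k = u).card :=
      Finset.card_pos.2 ⟨k, by simp [hk]⟩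
    have h1 : (0:ℝ) < (Finset.univ.filter fun k => σp k = u).card := by
      exact_mod_cast hcard
    have h2 : (0:ℝ) < l := by exact_mod_cast hl
    positivity
  -- treatment proportions of ξσ
  have htpd : ∀ u, tpd ξσ u = wstar u := by
    intro u
    show ∑ t, ξσ u t = wstar u
    rw [Finset.sum_congr rfl fun t _ => hξσ u t, rep_count hl hm hn σp σ hσ u,
      hwstar]
  -- cross sums
  have hconst : ∀ u, ∑ t, ξσ u t * h t (Sum.inl ()) = wstar u := by
    intro u
    rw [← htpd u, tpd]
    exact Finset.sum_congr rfl fun t _ => by rw [hh t]; simp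
  have hcross : ∀ u (q : Fin D × Bool), ∑ t, ξσ u t * h t (Sum.inr q) = 0 := by
    rintro u ⟨a, b⟩
    have hb0 : 0 < (a : ℕ) + 1 := Nat.succ_pos _
    have hbm : (a : ℕ) + 1 < m := lt_of_le_of_lt (Nat.succ_le_of_lt a.isLt) hDm
    have hS := trig_sum_zero hl hm hn σp σ hσ u hb0 hbm
    have hcast : ∀ t : Fin n, (2 * Real.pi * (((a : ℕ) + 1 : ℕ) : ℝ) * ((t : ℕ) + 1) / n)
        = 2 * Real.pi * ((a : ℕ) + 1) * ((t : ℕ) + 1) / n := by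
      intro t; push_cast; ring
    cases b
    · -- cosine
      have hterm : ∀ t : Fin n, ξσ u t * h t (Sum.inr (a, false))
          = (n : ℝ)⁻¹ * (if σ t = u then
              Complex.exp ((((2 * Real.pi * ((a : ℕ) + 1 : ℕ) * ((t : ℕ) + 1) / n : ℝ)) : ℂ)
                * Complex.I) else 0).re := by
        intro t
        rw [hξσ u t, hh t]
        simp only [Sum.elim_inr, apply_ite Complex.re, Complex.exp_ofReal_mul_I_re,
          Complex.zero_re, Bool.false_eq_true, if_false, hcast t]
        split_ifs <;> ring
      rw [Finset.sum_congr rfl fun t _ => hterm t, ← Finset.mul_sum,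
        ← Complex.re_sum, hS, Complex.zero_re, mul_zero]
    · -- sine
      have hterm : ∀ t : Fin n, ξσ u t * h t (Sum.inr (a, true))
          = (n : ℝ)⁻¹ * (if σ t = u then
              Complex.exp ((((2 * Real.pi * ((a : ℕ) + 1 : ℕ) * ((t : ℕ) + 1) / n : ℝ)) : ℂ)
                * Complex.I) else 0).im := by
        intro t
        rw [hξσ u t, hh t]
        simp only [Sum.elim_inr, apply_ite Complex.im, Complex.exp_ofReal_mul_I_im,
          Complex.zero_im, if_true, hcast t]
        split_ifs <;> ring
      rw [Finset.sum_congr rfl fun t _ => hterm t, ← Finset.mul_sum,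
        ← Complex.im_sum, hS, Complex.zero_im, mul_zero]
  -- the explicit matrix Z for ξσ
  set Zs : Matrix (Fin v ⊕ (Unit ⊕ Fin D × Bool)) (Fin s) ℝ :=
    Matrix.of fun i j => Sum.elim (fun u => (wstar u)⁻¹ * Q u j) (fun _ => 0) i
    with hZs
  have hMZ : momM h ξσ * Zs = K := by
    ext i j
    rw [Matrix.mul_apply, Fintype.sum_sum_type]
    have hz2 : ∀ q : Unit ⊕ Fin D × Bool,
        momM h ξσ i (Sum.inr q) * Zs (Sum.inr q) j = 0 := by
      intro q; simp [hZs]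
    rw [Finset.sum_congr rfl fun q _ => hz2 q, Finset.sum_const_zero, add_zero]
    cases i with
    | inl a =>
      have hterm : ∀ u, momM h ξσ (Sum.inl a) (Sum.inl u) * Zs (Sum.inl u) j
          = if a = u then tpd ξσ a * ((wstar u)⁻¹ * Q u j) else 0 := by
        intro u
        rw [momM_inl_inl, ite_mul, zero_mul]
        congr 1
      rw [Finset.sum_congr rfl fun u _ => hterm u, Finset.sum_ite_eq]
      have hKa : K (Sum.inl a) j = Q a j := rfl
      simp only [Finset.mem_univ, if_true, hKa, htpd a]
      field_simp [(hwpos a).ne']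
    | inr q =>
      cases q with
      | inl un =>
        have hterm : ∀ u, momM h ξσ (Sum.inr (Sum.inl un)) (Sum.inl u)
            * Zs (Sum.inl u) j = Q u j := by
          intro u
          rw [momM_inr_inl]
          cases un
          rw [hconst u]
          show wstar u * ((wstar u)⁻¹ * Q u j) = Q u j
          field_simp [(hwpos u).ne']
        rw [Finset.sum_congr rfl fun u _ => hterm u, hQc j]
        rfl
      | inr p =>
        have hterm : ∀ u, momM h ξσ (Sum.inr (Sum.inr p)) (Sum.inl u)
            * Zs (Sum.inl u) j = 0 := by
          intro u
          rw [momM_inr_inl, hcross u p, zero_mul]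
        rw [Finset.sum_congr rfl fun u _ => hterm u, Finset.sum_const_zero]
        rfl
  have hZK : Zsᵀ * K = Qᵀ * diagonal (fun u => (wstar u)⁻¹) * Q := by
    ext j j'
    rw [Matrix.mul_apply, Matrix.mul_apply, Fintype.sum_sum_type]
    have hz2 : ∀ q : Unit ⊕ Fin D × Bool, Zsᵀ j (Sum.inr q) * K (Sum.inr q) j' = 0 := by
      intro q; simp [hZs, transpose_apply]
    rw [Finset.sum_congr rfl fun q _ => hz2 q, Finset.sum_const_zero, add_zero]
    refine Finset.sum_congr rfl fun u _ => ?_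
    show (wstar u)⁻¹ * Q u j * Q u j' = (Qᵀ * diagonal fun u => (wstar u)⁻¹) j u * Q u j'
    rw [Matrix.mul_diagonal, transpose_apply]
    ring
  refine ⟨feasible_of_MZ h ξσ hMZ, ?_, ?_⟩
  · intro G hG
    rw [ginv_calc (momM_transpose h ξσ) hG hMZ, hZK]
    rfl
  · intro ξ hdes hfeas G hG
    set w : Fin v → ℝ := tpd ξ with hw
    have hwnn : ∀ u, 0 ≤ w u := fun u => Finset.sum_nonneg fun t _ => hdes.1 u t
    have hw0 : ∀ u, 0 < w u := by
      intro u
      rcases lt_or_eq_of_le (hwnn u) with hlt | heq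
      · exact hlt
      · exfalso
        have hzero : ∀ t, ξ u t = 0 := by
          intro t
          exact (Finset.sum_eq_zero_iff_of_nonneg fun t _ => hdes.1 u t).1
            heq.symm t (Finset.mem_univ t)
        obtain ⟨j, hj⟩ := hQrow u
        obtain ⟨y, hy⟩ := hfeas (LinearMap.mem_range_self _ (Pi.single j 1))
        apply hj
        have h1 : ((momM h ξ).mulVecLin y) (Sum.inl u) = 0 := by
          rw [mulVecLin_apply]
          show momM h ξ (Sum.inl u) ⬝ᵥ y = 0
          rw [dotProduct, Fintype.sum_sum_type]
          have e1 : ∀ u', momM h ξ (Sum.inl u) (Sum.inl u') * y (Sum.inl u') = 0 := by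
            intro u'
            rw [momM_inl_inl]
            rcases eq_or_ne u u' with rfl | hne
            · rw [if_pos rfl]
              show tpd ξ u * _ = 0
              rw [← hw, ← heq, zero_mul]
            · rw [if_neg hne, zero_mul]
          have e2 : ∀ q, momM h ξ (Sum.inl u) (Sum.inr q) * y (Sum.inr q) = 0 := by
            intro q
            rw [momM_inl_inr, Finset.sum_eq_zero fun t _ => by rw [hzero t, zero_mul],
              zero_mul]
          rw [Finset.sum_congr rfl fun u' _ => e1 u',
            Finset.sum_congr rfl fun q _ => e2 q]
          simp
        have h2 : (K.mulVecLin (Pi.single j 1)) (Sum.inl u) = Q u j := by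
          rw [mulVecLin_apply, mulVec_single_one]
          rfl
        rw [← h2, ← hy, h1]
    have hwsum : ∑ u, w u = 1 := hdes.2
    obtain ⟨Z, hZ⟩ := exists_Z_of_feasible h ξ hfeas
    rw [← hKdef] at hZ
    have hMsym := momM_transpose h ξ
    have hMpsd := momM_psd h ξ hdes.1
    have hKGK : Kᵀ * G * K = Zᵀ * K := ginv_calc hMsym hG hZ
    set B : Matrix (Fin s) (Fin s) ℝ := Qᵀ * diagonal (fun u => (w u)⁻¹) * Q with hB
    set A : Matrix (Fin s) (Fin s) ℝ := Zᵀ * K with hA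
    have hZt : Zᴴ = Zᵀ := by ext i j; simp [conjTranspose_apply]
    have hApsd : A.PosSemidef := by
      rw [hA, ← hZ, ← Matrix.mul_assoc]
      have := hMpsd.conjTranspose_mul_mul_same Z
      rwa [hZt] at this
    have hKx : ∀ x : Fin s → ℝ,
        K *ᵥ x = Sum.elim (fun u => (Q *ᵥ x) u) (fun _ => (0:ℝ)) := by
      intro x
      funext i
      cases i with
      | inl a => simp [hKdef, Kmat, mulVec, dotProduct]
      | inr q => simp [hKdef, Kmat, mulVec, dotProduct]
    have hAq : ∀ x, x ⬝ᵥ A *ᵥ x = (Z *ᵥ x) ⬝ᵥ (momM h ξ *ᵥ (Z *ᵥ x)) := by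
      intro x
      rw [hA, ← mulVec_mulVec, dotProduct_mulVec, vecMul_transpose, ← hZ,
        ← mulVec_mulVec]
    have hBq : ∀ x, x ⬝ᵥ B *ᵥ x = ∑ u, (w u)⁻¹ * ((Q *ᵥ x) u) ^ 2 := by
      intro x
      rw [hB, ← mulVec_mulVec, ← mulVec_mulVec, dotProduct_mulVec, vecMul_transpose]
      simp only [dotProduct, mulVec_diagonal]
      exact Finset.sum_congr rfl fun u _ => by ring
    have hle : ∀ x, x ⬝ᵥ B *ᵥ x ≤ x ⬝ᵥ A *ᵥ x := by
      intro x
      set a : Fin v → ℝ := Q *ᵥ x with ha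
      set z : Fin v ⊕ (Unit ⊕ Fin D × Bool) → ℝ :=
        Sum.elim (fun u => (w u)⁻¹ * a u) (fun _ => 0) with hzdef
      set y : Fin v ⊕ (Unit ⊕ Fin D × Bool) → ℝ := Z *ᵥ x with hydef
      have hzl : ∀ u, z (Sum.inl u) = (w u)⁻¹ * a u := fun u => rfl
      have hzr : ∀ q, z (Sum.inr q) = 0 := fun q => rfl
      have hMy : momM h ξ *ᵥ y = K *ᵥ x := by rw [hydef, mulVec_mulVec, hZ]
      have hzK : z ⬝ᵥ (K *ᵥ x) = ∑ u, (w u)⁻¹ * a u ^ 2 := by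
        rw [hKx x, dotProduct, Fintype.sum_sum_type]
        simp only [Sum.elim_inl, Sum.elim_inr, hzl, hzr, zero_mul, mul_zero,
          Finset.sum_const_zero, add_zero]
        exact Finset.sum_congr rfl fun u _ => by rw [← ha]; ring
      have hcol : ∀ u', (momM h ξ *ᵥ z) (Sum.inl u') = a u' := by
        intro u'
        show momM h ξ (Sum.inl u') ⬝ᵥ z = a u'
        rw [dotProduct, Fintype.sum_sum_type]
        have e1 : ∀ u, momM h ξ (Sum.inl u') (Sum.inl u) * z (Sum.inl u)
            = if u' = u then tpd ξ u' * ((w u)⁻¹ * a u) else 0 := by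
          intro u
          rw [momM_inl_inl, hzl, ite_mul, zero_mul]
        have e2 : ∀ q, momM h ξ (Sum.inl u') (Sum.inr q) * z (Sum.inr q) = 0 := by
          intro q; rw [hzr, mul_zero]
        rw [Finset.sum_congr rfl fun u _ => e1 u, Finset.sum_congr rfl fun q _ => e2 q,
          Finset.sum_const_zero, add_zero, Finset.sum_ite_eq]
        simp only [Finset.mem_univ, if_true, ← hw]
        field_simp [(hw0 u').ne']
      have hzMz : z ⬝ᵥ (momM h ξ *ᵥ z) = ∑ u, (w u)⁻¹ * a u ^ 2 := by
        rw [dotProduct, Fintype.sum_sum_type]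
        have e2 : ∀ q, z (Sum.inr q) * (momM h ξ *ᵥ z) (Sum.inr q) = 0 := by
          intro q; rw [hzr, zero_mul]
        rw [Finset.sum_congr rfl fun q _ => e2 q, Finset.sum_const_zero, add_zero]
        refine Finset.sum_congr rfl fun u _ => ?_
        rw [hcol u, hzl]
        ring
      have hzMy : z ⬝ᵥ (momM h ξ *ᵥ y) = ∑ u, (w u)⁻¹ * a u ^ 2 := by
        rw [hMy]; exact hzK
      have hyMy : y ⬝ᵥ (momM h ξ *ᵥ y) = x ⬝ᵥ A *ᵥ x := (hAq x).symm
      have hcs := psd_cs hMpsd y z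
      rw [hzMy, hzMz, hyMy] at hcs
      have hβ0 : 0 ≤ ∑ u, (w u)⁻¹ * a u ^ 2 :=
        Finset.sum_nonneg fun u _ =>
          mul_nonneg (inv_nonneg.2 (hwnn u)) (sq_nonneg _)
      have hq0 : 0 ≤ x ⬝ᵥ A *ᵥ x := by
        rw [← hyMy]; exact psd_dot_nonneg hMpsd y
      rw [hBq x, ← ha]
      rcases eq_or_lt_of_le hβ0 with hz0 | hz0
      · rw [← hz0]; exact hq0
      · nlinarith [hcs]
    have hBherm : B.IsHermitian := by
      show _ = _
      have hBt : Bᵀ = B := by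
        rw [hB, transpose_mul, transpose_mul, transpose_transpose,
          diagonal_transpose, Matrix.mul_assoc]
      ext i j
      rw [conjTranspose_apply, star_trivial]
      exact congrFun (congrFun hBt i) j
    have hQker : ∀ x : Fin s → ℝ, Q *ᵥ x = 0 → x = 0 := by
      intro x hx
      have hrange : Module.finrank ℝ (LinearMap.range Q.mulVecLin) = s := hQrank
      have hrk := Q.mulVecLin.finrank_range_add_finrank_ker
      rw [hrange, Module.finrank_fin_fun] at hrk
      have hker0 : Module.finrank ℝ (LinearMap.ker Q.mulVecLin) = 0 := by omega
      have hker : LinearMap.ker Q.mulVecLin = ⊥ := Submodule.finrank_eq_zero.1 hker0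
      have hmem : x ∈ LinearMap.ker Q.mulVecLin := by
        rw [LinearMap.mem_ker, mulVecLin_apply, hx]
      rw [hker, Submodule.mem_bot] at hmem
      exact hmem
    have hBpd : B.PosDef := by
      refine posDef_iff_dotProduct_mulVec.mpr ⟨hBherm, fun x hx => ?_⟩
      rw [star_pi]
      show 0 < x ⬝ᵥ B *ᵥ x
      rw [hBq x]
      have hQx : Q *ᵥ x ≠ 0 := fun hc => hx (hQker x hc)
      obtain ⟨u0, hu0⟩ : ∃ u0, (Q *ᵥ x) u0 ≠ 0 := by
        by_contra hc
        push_neg at hc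
        exact hQx (funext hc)
      refine Finset.sum_pos' (fun u _ =>
        mul_nonneg (inv_nonneg.2 (hwnn u)) (sq_nonneg _)) ⟨u0, Finset.mem_univ u0, ?_⟩
      exact mul_pos (inv_pos.2 (hw0 u0)) (by positivity)
    have hABpsd : (A - B).PosSemidef := by
      refine posSemidef_iff_dotProduct_mulVec.mpr ⟨?_, ?_⟩
      · exact hApsd.1.sub hBherm
      · intro x
        rw [star_pi, sub_mulVec, dotProduct_sub, sub_nonneg]
        exact hle x
    have hApd : A.PosDef := by
      refine posDef_iff_dotProduct_mulVec.mpr ⟨hApsd.1, fun x hx => ?_⟩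
      rw [star_pi]
      refine lt_of_lt_of_le ?_ (hle x)
      have := hBpd.dotProduct_mulVec_pos hx
      rwa [star_pi] at this
    have hinv := inv_sub_inv_psd hApd hBpd hABpsd
    have hΦ1 : Φ (A⁻¹) ≤ Φ (B⁻¹) :=
      hiso _ _ hApd.inv.posSemidef hBpd.inv.posSemidef hinv
    have hNQ : B⁻¹ = NQ Q w := rfl
    rw [hKGK]
    exact le_trans hΦ1 (by rw [hNQ]; exact hopt w hw0 hwsum)

end
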